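/- Optimal target sets on complete graphs (Theorem on complete graphs): Let G be the complete graph on a finite vertex set V, let t : V → ℕ be a threshold function, let λ ∈ ℕ be a latency bound and β ∈ ℕ a budget with β ≤ |V|. Let S ⊆ V consist of β nodes with highest thresholds, i.e., |S| = β and for each v ∈ S and each w ∈ V ∖ S one has t(v) ≥ t(w). Then S is an optimal solution to the (λ,β)-Maximally Influencing Set problem on G: for every S' ⊆ V with |S'| ≤ β, |Active[S',λ]| ≤ |Active[S,λ]|. -/
import Mathlib


open Classical

/-- The influence diffusion (activation) process: `Active G t S τ` is the set of vertices
influenced within round `τ`, starting from target set `S`, in the graph `G` with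
threshold function `t`. -/
noncomputable def Active {V : Type*} [Fintype V] (G : SimpleGraph V) (t : V → ℕ)
    (S : Finset V) : ℕ → Finset V
  | 0 => S
  | τ + 1 => Active G t S τ ∪
      Finset.univ.filter fun u => t u ≤ (G.neighborFinset u ∩ Active G t S τ).card

section Aux

variable {V : Type*} [Fintype V]

/-- Vertices with threshold at most `c`. -/
noncomputable def Lc (t : V → ℕ) (c : ℕ) : Finset V :=
  Finset.univ.filter (fun u => t u ≤ c)

lemma Lc_mono (t : V → ℕ) {c d : ℕ} (h : c ≤ d) : Lc t c ⊆ Lc t d := by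
  intro u hu
  simp only [Lc, Finset.mem_filter, Finset.mem_univ, true_and] at *
  exact hu.trans h

lemma Active_top_succ (t : V → ℕ) (S : Finset V) (τ : ℕ) :
    Active (⊤ : SimpleGraph V) t S (τ + 1) =
      Active (⊤ : SimpleGraph V) t S τ ∪ Lc t (Active (⊤ : SimpleGraph V) t S τ).card := by
  ext u
  simp only [Active, Lc, Finset.mem_union, Finset.mem_filter, Finset.mem_univ, true_and]
  constructor
  · rintro (h | h)
    · exact Or.inl h
    · exact Or.inr (h.trans (Finset.card_le_card Finset.inter_subset_right))
  · rintro (h | h)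
    · exact Or.inl h
    · by_cases hu : u ∈ Active (⊤ : SimpleGraph V) t S τ
      · exact Or.inl hu
      · refine Or.inr ?_
        apply h.trans
        apply Finset.card_le_card
        intro v hv
        refine Finset.mem_inter.mpr ⟨?_, hv⟩
        rw [SimpleGraph.mem_neighborFinset, SimpleGraph.top_adj]
        rintro rfl
        exact hu hv

lemma subset_Active (t : V → ℕ) (S : Finset V) (τ : ℕ) :
    S ⊆ Active (⊤ : SimpleGraph V) t S τ := by
  induction τ with
  | zero => exact subset_rfl
  | succ τ ih =>
    rw [Active_top_succ]
    exact ih.trans Finset.subset_union_left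

lemma Active_card_mono (t : V → ℕ) (S : Finset V) (τ : ℕ) :
    (Active (⊤ : SimpleGraph V) t S τ).card ≤ (Active (⊤ : SimpleGraph V) t S (τ + 1)).card := by
  rw [Active_top_succ]
  exact Finset.card_le_card Finset.subset_union_left

lemma Active_subset_union (t : V → ℕ) (S : Finset V) (τ : ℕ) :
    Active (⊤ : SimpleGraph V) t S τ ⊆ S ∪ Lc t (Active (⊤ : SimpleGraph V) t S τ).card := by
  induction τ with
  | zero => exact Finset.subset_union_left
  | succ τ ih =>
    rw [Active_top_succ]
    apply Finset.union_subset
    · exact ih.trans (Finset.union_subset_union subset_rfl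
        (Lc_mono t (Finset.card_le_card Finset.subset_union_left)))
    · exact Finset.subset_union_right.trans (Finset.union_subset_union subset_rfl
        (Lc_mono t (Finset.card_le_card Finset.subset_union_left)))

lemma Active_top_succ_eq (t : V → ℕ) (S : Finset V) (τ : ℕ) :
    Active (⊤ : SimpleGraph V) t S (τ + 1) =
      S ∪ Lc t (Active (⊤ : SimpleGraph V) t S τ).card := by
  apply Finset.Subset.antisymm
  · rw [Active_top_succ]
    exact Finset.union_subset
      ((Active_subset_union t S τ).trans
        (Finset.union_subset_union subset_rfl (Lc_mono t le_rfl)))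
      Finset.subset_union_right
  · rw [Active_top_succ]
    exact Finset.union_subset ((subset_Active t S τ).trans Finset.subset_union_left)
      Finset.subset_union_right

/-- Key combinatorial lemma: since `S` holds the top thresholds,
`S'` has at most as many elements above any cutoff as `S` does. -/
lemma key (t : V → ℕ) (S S' : Finset V) (hS : ∀ v ∈ S, ∀ w, w ∉ S → t w ≤ t v)
    (hS' : S'.card ≤ S.card) (c : ℕ) :
    (S' \ Lc t c).card ≤ (S \ Lc t c).card := by
  by_cases h : ∃ w, w ∉ S ∧ c < t w
  · obtain ⟨w, hwS, hwc⟩ := h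
    have : S \ Lc t c = S := by
      apply Finset.sdiff_eq_self_of_disjoint
      rw [Finset.disjoint_left]
      intro v hv hvL
      simp only [Lc, Finset.mem_filter, Finset.mem_univ, true_and] at hvL
      exact absurd (hwc.trans_le (hS v hv w hwS)) (not_lt.mpr hvL)
    rw [this]
    exact (Finset.card_le_card (Finset.sdiff_subset)).trans hS'
  · push_neg at h
    apply Finset.card_le_card
    intro u hu
    rw [Finset.mem_sdiff] at hu ⊢
    refine ⟨?_, hu.2⟩
    have : c < t u := by
      by_contra hc
      exact hu.2 (by simp [Lc, not_lt.mp hc])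
    by_contra huS
    exact absurd this (not_lt.mpr (by simpa [Lc] using h u huS))

end Aux

/-- Optimal target sets on complete graphs: a set `S` of `β` vertices with highest
thresholds is an optimal solution to the `(lam, β)`-Maximally Influencing Set problem
on the complete graph. -/
theorem complete_graph_optimal_target_set {V : Type*} [Fintype V] (t : V → ℕ)
    (lam β : ℕ) (hβ : β ≤ Fintype.card V) (S : Finset V) (hScard : S.card = β)
    (hS : ∀ v ∈ S, ∀ w, w ∉ S → t w ≤ t v)
    (S' : Finset V) (hS' : S'.card ≤ β) :
    (Active (⊤ : SimpleGraph V) t S' lam).card ≤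
      (Active (⊤ : SimpleGraph V) t S lam).card := by
  have hcard : S'.card ≤ S.card := by omega
  induction lam with
  | zero => simpa [Active] using hcard
  | succ τ ih =>
    rw [Active_top_succ_eq t S τ, Active_top_succ_eq t S' τ]
    set a := (Active (⊤ : SimpleGraph V) t S τ).card with ha
    set a' := (Active (⊤ : SimpleGraph V) t S' τ).card with ha'
    calc (S' ∪ Lc t a').card ≤ (S' ∪ Lc t a).card := by
            exact Finset.card_le_card (Finset.union_subset_union subset_rfl (Lc_mono t ih))
      _ = (S' \ Lc t a).card + (Lc t a).card := (Finset.card_sdiff_add_card S' (Lc t a)).symm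
      _ ≤ (S \ Lc t a).card + (Lc t a).card :=
            Nat.add_le_add_right (key t S S' hS hcard a) _
      _ = (S ∪ Lc t a).card := Finset.card_sdiff_add_card S (Lc t a)
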